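/- For $|q| < 1$ and $|xyq| < 1$: $\frac{(xq;q)_\infty (yq;q)_\infty}{(xyq;q)_\infty} = \sum_{r,s \geq 0} (-1)^{r+s} \frac{q^{\frac12 (r-s)^2 + \frac12 (r+s)} x^r y^s}{(q;q)_r (q;q)_s}$. -/

import Mathlib

/-- `(q;q)_n = ∏_{i=1}^n (1 - q^i)`. -/
noncomputable def qPochN (q : ℂ) (n : ℕ) : ℂ :=
  ∏ i ∈ Finset.range n, (1 - q ^ (i + 1))

namespace QPaux
open Filter

section P1



lemma qP_zero (q : ℂ) : qPochN q 0 = 1 := Finset.prod_range_zero _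
lemma qP_succ (q : ℂ) (n : ℕ) : qPochN q (n + 1) = qPochN q n * (1 - q ^ (n + 1)) :=
  Finset.prod_range_succ _ _

/-- elementary bound : for 0 ≤ x ≤ c < 1, exp(-(x/(1-c))) ≤ 1 - x -/
lemma exp_bound {x c : ℝ} (hx : 0 ≤ x) (hxc : x ≤ c) (hc : c < 1) :
    Real.exp (-(x / (1 - c))) ≤ 1 - x := by
  have h1c : 0 < 1 - c := by linarith
  have h2 : (1 : ℝ) ≤ (1 - x) * (1 + x / (1 - c)) := by
    have h3 : (1 - x) * (1 + x / (1 - c)) - 1 = (x * (c - x)) / (1-c) := by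
      field_simp; ring
    nlinarith [div_nonneg (mul_nonneg hx (by linarith : (0:ℝ) ≤ c - x)) h1c.le]
  have h3 : 1 + x / (1 - c) ≤ Real.exp (x / (1 - c)) := by
    have := Real.add_one_le_exp (x / (1 - c)); linarith
  have hx1 : x < 1 := lt_of_le_of_lt hxc hc
  have h4 := mul_le_mul_of_nonneg_left h3 (by linarith : (0:ℝ) ≤ 1 - x)
  rw [Real.exp_neg, inv_le_iff_one_le_mul₀ (Real.exp_pos _)]
  nlinarith [h2, h4]

variable {q : ℂ} (hq : ‖q‖ < 1)

include hq

lemma norm_qP_ge (n : ℕ) : Real.exp (-(‖q‖ / (1 - ‖q‖)^2)) ≤ ‖qPochN q n‖ := by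
  have h0 : (0:ℝ) ≤ ‖q‖ := norm_nonneg q
  have h1c : (0:ℝ) < 1 - ‖q‖ := by linarith
  have key : ∀ i : ℕ, Real.exp (-(‖q‖^(i+1) / (1 - ‖q‖))) ≤ ‖1 - q ^ (i+1)‖ := by
    intro i
    have h1 : ‖q‖ ^ (i+1) ≤ ‖q‖ := by
      calc ‖q‖^(i+1) ≤ ‖q‖^1 := pow_le_pow_of_le_one h0 hq.le (by omega)
      _ = ‖q‖ := pow_one _
    have h2 : 1 - ‖q^(i+1)‖ ≤ ‖1 - q^(i+1)‖ := by
      have := norm_sub_norm_le (1 : ℂ) (q^(i+1)); simpa using this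
    refine le_trans ?_ h2
    rw [norm_pow]
    exact exp_bound (pow_nonneg h0 _) h1 hq
  have hsum : ∑ i ∈ Finset.range n, ‖q‖^(i+1) / (1-‖q‖) ≤ ‖q‖ / (1-‖q‖)^2 := by
    rw [← Finset.sum_div, div_le_div_iff₀ h1c (by positivity)]
    have hgeo : ∑ i ∈ Finset.range n, ‖q‖^(i+1) ≤ ‖q‖ / (1 - ‖q‖) := by
      have h1 : ∑ i ∈ Finset.range n, ‖q‖^(i+1) = ‖q‖ * ∑ i ∈ Finset.range n, ‖q‖^i := by
        rw [Finset.mul_sum]; exact Finset.sum_congr rfl fun i _ => by ring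
      have h2 : ∑ i ∈ Finset.range n, ‖q‖^i ≤ (1 - ‖q‖)⁻¹ := by
        have hgm := geom_sum_mul (‖q‖) n
        have hpn : (0:ℝ) ≤ ‖q‖^n := pow_nonneg h0 n
        rw [inv_eq_one_div, le_div_iff₀ h1c]
        nlinarith [hgm]
      rw [h1, div_eq_mul_inv]
      exact mul_le_mul_of_nonneg_left h2 h0
    calc (∑ i ∈ Finset.range n, ‖q‖^(i+1)) * (1-‖q‖)^2
        = ((∑ i ∈ Finset.range n, ‖q‖^(i+1)) * (1-‖q‖)) * (1-‖q‖) := by ring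
    _ ≤ (‖q‖ / (1-‖q‖) * (1-‖q‖)) * (1-‖q‖) := by
        apply mul_le_mul_of_nonneg_right (mul_le_mul_of_nonneg_right hgeo h1c.le) h1c.le
    _ = ‖q‖ * (1-‖q‖) := by
        rw [div_mul_cancel₀ _ h1c.ne']
  calc Real.exp (-(‖q‖/(1-‖q‖)^2))
      ≤ Real.exp (-(∑ i ∈ Finset.range n, ‖q‖^(i+1) / (1-‖q‖))) := by
        apply Real.exp_le_exp.2; linarith
  _ = ∏ i ∈ Finset.range n, Real.exp (-(‖q‖^(i+1) / (1-‖q‖))) := by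
        rw [← Real.exp_sum, Finset.sum_neg_distrib]
  _ ≤ ∏ i ∈ Finset.range n, ‖1 - q^(i+1)‖ := by
        apply Finset.prod_le_prod (fun i _ => (Real.exp_pos _).le) (fun i _ => key i)
  _ = ‖qPochN q n‖ := by rw [qPochN, norm_prod]

lemma qP_ne_zero (n : ℕ) : qPochN q n ≠ 0 := by
  have := norm_qP_ge hq n
  have h2 : (0:ℝ) < Real.exp (-(‖q‖ / (1 - ‖q‖)^2)) := Real.exp_pos _
  intro h
  rw [h, norm_zero] at this
  linarith
end P1

section P2




noncomputable def dE (q : ℂ) : ℝ := Real.exp (-(‖q‖ / (1 - ‖q‖)^2))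

lemma dE_pos (q : ℂ) : 0 < dE q := Real.exp_pos _


def tri (r : ℕ) : ℕ := r * (r + 1) / 2

lemma two_tri (r : ℕ) : 2 * tri r = r * (r + 1) := by
  rw [tri, Nat.two_mul_div_two_of_even (Nat.even_mul_succ_self r)]

lemma tri_succ (r : ℕ) : tri (r + 1) = tri r + (r + 1) := by
  have h1 := two_tri r
  have h2 := two_tri (r + 1)
  have : 2 * tri (r+1) = 2 * (tri r + (r+1)) := by rw [h2, Nat.mul_add]; nlinarith
  omega

lemma tri_ge (r : ℕ) : r ≤ tri r := by
  have := two_tri r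
  nlinarith

noncomputable def cF (q : ℂ) (r : ℕ) : ℂ := (-1)^r * q^(tri r) / qPochN q r
noncomputable def cG (q : ℂ) (n : ℕ) : ℂ := q^n / qPochN q n

lemma cF_zero (q : ℂ) : cF q 0 = 1 := by simp [cF, tri, qP_zero]
lemma cG_zero (q : ℂ) : cG q 0 = 1 := by simp [cG, qP_zero]

variable {q : ℂ} (hq : ‖q‖ < 1)

include hq

lemma one_sub_qpow_ne_zero (i : ℕ) : (1 : ℂ) - q^(i+1) ≠ 0 := by
  intro h
  have h1 : q^(i+1) = 1 := by linear_combination -h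
  have : ‖q^(i+1)‖ < 1 := by
    rw [norm_pow]
    calc ‖q‖^(i+1) ≤ ‖q‖^1 := pow_le_pow_of_le_one (norm_nonneg q) hq.le (by omega)
    _ < 1 := by simpa using hq
  rw [h1] at this; simp at this

lemma norm_cF_le (r : ℕ) : ‖cF q r‖ ≤ ‖q‖^r / dE q := by
  rw [cF]
  rw [norm_div, norm_mul, norm_pow, norm_pow]
  have h1 : ‖(-1 : ℂ)‖ = 1 := by simp
  rw [h1, one_pow, one_mul]
  apply div_le_div₀ (by positivity) _ (dE_pos q) (norm_qP_ge hq r)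
  exact pow_le_pow_of_le_one (norm_nonneg q) hq.le (tri_ge r)

lemma norm_cG_le (n : ℕ) : ‖cG q n‖ ≤ ‖q‖^n / dE q := by
  rw [cG, norm_div, norm_pow]
  apply div_le_div₀ (by positivity) le_rfl (dE_pos q) (norm_qP_ge hq n)

lemma cF_succ (r : ℕ) : cF q (r+1) = cF q r * (-(q^(r+1)) / (1 - q^(r+1))) := by
  rw [cF, cF, qP_succ, tri_succ, pow_add, pow_succ]
  field_simp [qP_ne_zero hq, one_sub_qpow_ne_zero hq r]
  ring

lemma summable_norm_cF (t : ℂ) : Summable (fun r => ‖cF q r * t^r‖) := by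
  apply summable_of_ratio_norm_eventually_le (r := 1/2) (by norm_num)
  have htend : Filter.Tendsto (fun r : ℕ => ‖q‖^(r+1) * ‖t‖ / (1 - ‖q‖)) Filter.atTop (nhds 0) := by
    have h1 : Filter.Tendsto (fun r : ℕ => ‖q‖^(r+1)) Filter.atTop (nhds 0) := by
      have := (tendsto_pow_atTop_nhds_zero_of_lt_one (norm_nonneg q) hq).comp
        (Filter.tendsto_add_atTop_nat 1)
      exact this
    simpa using (h1.mul_const ‖t‖).div_const (1 - ‖q‖)
  filter_upwards [htend.eventually_le_const (by norm_num : (0:ℝ) < 1/2)] with r hr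
  have hP : (1:ℂ) - q^(r+1) ≠ 0 := one_sub_qpow_ne_zero hq r
  have hnorm1 : (1:ℝ) - ‖q‖ ≤ ‖1 - q^(r+1)‖ := by
    have h2 := norm_sub_norm_le (1 : ℂ) (q^(r+1))
    have h3 : ‖q^(r+1)‖ ≤ ‖q‖ := by
      rw [norm_pow]
      calc ‖q‖^(r+1) ≤ ‖q‖^1 := pow_le_pow_of_le_one (norm_nonneg q) hq.le (by omega)
      _ = ‖q‖ := pow_one _
    simp only [norm_one] at h2
    linarith
  have key : ‖cF q (r+1) * t^(r+1)‖ = ‖cF q r * t^r‖ * (‖q‖^(r+1) * ‖t‖ / ‖1 - q^(r+1)‖) := by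
    rw [cF_succ hq]
    rw [show cF q r * (-(q^(r+1)) / (1 - q^(r+1))) * t^(r+1)
        = (cF q r * t^r) * (-(q^(r+1)) * t / (1 - q^(r+1))) by rw [pow_succ t r]; ring]
    simp only [norm_mul, norm_div, norm_neg, norm_pow]
  rw [Real.norm_of_nonneg (norm_nonneg _), Real.norm_of_nonneg (norm_nonneg _), key]
  have h1q : (0:ℝ) < 1 - ‖q‖ := by linarith
  have hfac : ‖q‖^(r+1) * ‖t‖ / ‖1 - q^(r+1)‖ ≤ ‖q‖^(r+1) * ‖t‖ / (1 - ‖q‖) := by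
    apply div_le_div_of_nonneg_left (by positivity) h1q hnorm1
  calc ‖cF q r * t^r‖ * (‖q‖^(r+1) * ‖t‖ / ‖1 - q^(r+1)‖)
      ≤ ‖cF q r * t^r‖ * (1/2) := by
        apply mul_le_mul_of_nonneg_left (hfac.trans hr) (norm_nonneg _)
  _ = 1/2 * ‖cF q r * t^r‖ := by ring

lemma summable_cF (t : ℂ) : Summable (fun r => cF q r * t^r) :=
  (summable_norm_cF hq t).of_norm

lemma summable_norm_cG {t : ℂ} (ht : ‖t‖ * ‖q‖ < 1) :
    Summable (fun n => ‖cG q n * t^n‖) := by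
  have hgeom : Summable (fun n : ℕ => (‖t‖ * ‖q‖)^n / dE q) :=
    (summable_geometric_of_lt_one (by positivity) ht).div_const _
  apply Summable.of_nonneg_of_le (fun n => norm_nonneg _) _ hgeom
  intro n
  rw [norm_mul, norm_pow]
  calc ‖cG q n‖ * ‖t‖^n ≤ (‖q‖^n / dE q) * ‖t‖^n :=
        mul_le_mul_of_nonneg_right (norm_cG_le hq n) (by positivity)
  _ = (‖t‖ * ‖q‖)^n / dE q := by rw [mul_pow]; ring

lemma summable_cG {t : ℂ} (ht : ‖t‖ * ‖q‖ < 1) : Summable (fun n => cG q n * t^n) :=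
  (summable_norm_cG hq ht).of_norm

noncomputable def Fs (q t : ℂ) : ℂ := ∑' r, cF q r * t^r
noncomputable def Gs (q t : ℂ) : ℂ := ∑' n, cG q n * t^n

lemma Feq (t : ℂ) : Fs q t = (1 - t*q) * Fs q (t*q) := by
  have hs1 := summable_cF hq t
  have hs2 := summable_cF hq (t*q)
  have hsub : (∑' r, (cF q r * t^r - cF q r * (t*q)^r)) = Fs q t - Fs q (t*q) :=
    Summable.tsum_sub hs1 hs2
  have hterm : ∀ r : ℕ, cF q (r+1) * t^(r+1) - cF q (r+1) * (t*q)^(r+1)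
      = (-(t*q)) * (cF q r * (t*q)^r) := by
    intro r
    have hP := qP_ne_zero hq r
    have h1 := one_sub_qpow_ne_zero hq r
    rw [cF_succ hq]
    field_simp
    ring
  have h2 : (∑' r, (cF q r * t^r - cF q r * (t*q)^r))
      = ∑' r, (-(t*q)) * (cF q r * (t*q)^r) := by
    rw [Summable.tsum_eq_zero_add (hs1.sub hs2)]
    simp only [pow_zero, mul_one, sub_self, zero_add]
    exact tsum_congr hterm
  rw [h2, tsum_mul_left] at hsub
  have : Fs q t - Fs q (t*q) = (-(t*q)) * Fs q (t*q) := hsub.symm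
  linear_combination this

lemma Geq {t : ℂ} (ht : ‖t‖ * ‖q‖ < 1) : Gs q t * (1 - t*q) = Gs q (t*q) := by
  have hs1 := summable_cG hq ht
  have hs2 : Summable (fun n => cG q n * (t*q)^n) := by
    apply summable_cG hq
    calc ‖t*q‖ * ‖q‖ ≤ ‖t‖ * ‖q‖ * 1 := by
          rw [norm_mul]
          apply mul_le_mul_of_nonneg_left hq.le (by positivity) |>.trans
          rw [mul_one]
    _ < 1 := by rwa [mul_one]
  have hsub : (∑' r, (cG q r * t^r - cG q r * (t*q)^r)) = Gs q t - Gs q (t*q) :=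
    Summable.tsum_sub hs1 hs2
  have hterm : ∀ r : ℕ, cG q (r+1) * t^(r+1) - cG q (r+1) * (t*q)^(r+1)
      = (t*q) * (cG q r * t^r) := by
    intro r
    have hP := qP_ne_zero hq r
    have h1 := one_sub_qpow_ne_zero hq r
    simp only [cG, qP_succ]
    field_simp
    ring
  have h2 : (∑' r, (cG q r * t^r - cG q r * (t*q)^r))
      = ∑' r, (t*q) * (cG q r * t^r) := by
    rw [Summable.tsum_eq_zero_add (hs1.sub hs2)]
    simp only [pow_zero, mul_one, sub_self, zero_add]
    exact tsum_congr hterm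
  rw [h2, tsum_mul_left] at hsub
  have : Gs q t - Gs q (t*q) = (t*q) * Gs q t := hsub.symm
  linear_combination this

end P2

section P3


open Filter


variable {q : ℂ} (hq : ‖q‖ < 1)

include hq

lemma multipliable_fac (u : ℂ) : Multipliable (fun k : ℕ => 1 - u * q^(k+1)) := by
  by_cases hz : ∀ k : ℕ, (1:ℂ) - u * q^(k+1) ≠ 0
  · refine Complex.multipliable_of_summable_log ?_
    have htend : Tendsto (fun k : ℕ => ‖u‖ * ‖q‖^(k+1)) atTop (nhds 0) := by
      have h1 : Tendsto (fun k : ℕ => ‖q‖^(k+1)) atTop (nhds 0) :=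
        (tendsto_pow_atTop_nhds_zero_of_lt_one (norm_nonneg q) hq).comp
          (tendsto_add_atTop_nat 1)
      simpa using h1.const_mul ‖u‖
    obtain ⟨m, hm⟩ := (htend.eventually_le_const (by norm_num : (0:ℝ) < 1/2)).exists
    rw [← summable_nat_add_iff m]
    have hbound : ∀ k : ℕ, ‖Complex.log (1 - u * q^(k+m+1))‖ ≤ (3/2) * (1/2) * ‖q‖^k := by
      intro k
      have h2 : ‖-(u * q^(k+m+1))‖ ≤ (1/2) * ‖q‖^k := by
        rw [norm_neg, norm_mul, norm_pow]
        calc ‖u‖ * ‖q‖^(k+m+1) = (‖u‖ * ‖q‖^(m+1)) * ‖q‖^k := by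
              rw [show k+m+1 = (m+1)+k by omega, pow_add]; ring
        _ ≤ (1/2) * ‖q‖^k :=
            mul_le_mul_of_nonneg_right hm (by positivity)
      have h3 : ‖Complex.log (1 + -(u * q^(k+m+1)))‖ ≤ 3/2 * ‖-(u * q^(k+m+1))‖ :=
        Complex.norm_log_one_add_half_le_self (by
          calc ‖-(u * q^(k+m+1))‖ ≤ (1/2) * ‖q‖^k := h2
          _ ≤ (1/2) * 1 := mul_le_mul_of_nonneg_left
              (pow_le_one₀ (norm_nonneg q) hq.le) (by norm_num)
          _ = 1/2 := mul_one _)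
      rw [show (1:ℂ) + -(u * q^(k+m+1)) = 1 - u * q^(k+m+1) by ring] at h3
      calc ‖Complex.log (1 - u * q^(k+m+1))‖ ≤ 3/2 * ‖-(u * q^(k+m+1))‖ := h3
      _ ≤ 3/2 * ((1/2) * ‖q‖^k) := mul_le_mul_of_nonneg_left h2 (by norm_num)
      _ = (3/2) * (1/2) * ‖q‖^k := by ring
    exact Summable.of_norm_bounded
      ((summable_geometric_of_lt_one (norm_nonneg q) hq).mul_left _) hbound
  · push_neg at hz
    obtain ⟨k, hk⟩ := hz
    refine ⟨0, ?_⟩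
    rw [HasProd]
    have hev : ∀ᶠ s : Finset ℕ in atTop, ∏ i ∈ s, ((1:ℂ) - u*q^(i+1)) = 0 := by
      filter_upwards [Filter.eventually_ge_atTop ({k} : Finset ℕ)] with s hs
      exact Finset.prod_eq_zero (by simpa using hs) hk
    exact Tendsto.congr' (by filter_upwards [hev] with s hs; exact hs.symm) tendsto_const_nhds

lemma Fiter (t : ℂ) (N : ℕ) :
    Fs q t = (∏ k ∈ Finset.range N, (1 - t*q^(k+1))) * Fs q (t * q^N) := by
  induction N with
  | zero => simp
  | succ n ih =>
    have e1 : t*q^n*q = t*q^(n+1) := by rw [pow_succ]; ring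
    rw [ih, Feq hq (t*q^n), e1, Finset.prod_range_succ]
    ring

lemma Giter {t : ℂ} (ht : ‖t‖ * ‖q‖ < 1) (N : ℕ) :
    Gs q t * (∏ k ∈ Finset.range N, (1 - t*q^(k+1))) = Gs q (t * q^N) := by
  induction N with
  | zero => simp
  | succ n ih =>
    have e1 : t*q^n*q = t*q^(n+1) := by rw [pow_succ]; ring
    have h2 : ‖t*q^n‖ * ‖q‖ < 1 := by
      rw [norm_mul, norm_pow]
      calc ‖t‖ * ‖q‖^n * ‖q‖ ≤ ‖t‖ * 1 * ‖q‖ := by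
            apply mul_le_mul_of_nonneg_right _ (norm_nonneg q)
            exact mul_le_mul_of_nonneg_left (pow_le_one₀ (norm_nonneg q) hq.le) (norm_nonneg t)
      _ = ‖t‖ * ‖q‖ := by ring
      _ < 1 := ht
    rw [Finset.prod_range_succ, ← mul_assoc, ih, ← e1]
    exact Geq hq h2

set_option maxHeartbeats 1000000 in
lemma tendsto_sum_one (coef : ℕ → ℂ) (h0 : coef 0 = 1)
    (hb : ∀ k, ‖coef k‖ ≤ ‖q‖^k / dE q) (t : ℂ) :
    Tendsto (fun N : ℕ => ∑' r, coef r * (t*q^N)^r) atTop (nhds 1) := by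
  have hc0 : (0:ℝ) ≤ ‖q‖ := norm_nonneg q
  have hd := dE_pos q
  have hsN : Tendsto (fun N : ℕ => ‖q‖ * (‖t‖ * ‖q‖^N)) atTop (nhds 0) := by
    have h1 : Tendsto (fun N : ℕ => ‖q‖^N) atTop (nhds 0) :=
      tendsto_pow_atTop_nhds_zero_of_lt_one hc0 hq
    simpa using (h1.const_mul ‖t‖).const_mul ‖q‖
  have key : Tendsto (fun N : ℕ => (∑' r, coef r * (t*q^N)^r) - 1) atTop (nhds 0) := by
    apply squeeze_zero_norm' (a := fun N => 2 * (‖q‖ * (‖t‖ * ‖q‖^N)) / dE q)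
    · filter_upwards [hsN.eventually_le_const (by norm_num : (0:ℝ) < 1/2)] with N hN
      set s : ℂ := t * q^N with hs
      have hsnorm : ‖s‖ = ‖t‖ * ‖q‖^N := by rw [hs, norm_mul, norm_pow]
      have hcs : ‖q‖ * ‖s‖ ≤ 1/2 := by rw [hsnorm]; exact hN
      have hcs1 : ‖q‖ * ‖s‖ < 1 := lt_of_le_of_lt hcs (by norm_num)
      have hcs0 : (0:ℝ) ≤ ‖q‖ * ‖s‖ := by positivity
      have hbnd : ∀ r : ℕ, ‖coef r * s^r‖ ≤ (‖q‖ * ‖s‖)^r / dE q := by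
        intro r
        rw [norm_mul, norm_pow]
        calc ‖coef r‖ * ‖s‖^r ≤ (‖q‖^r / dE q) * ‖s‖^r :=
              mul_le_mul_of_nonneg_right (hb r) (by positivity)
        _ = (‖q‖ * ‖s‖)^r / dE q := by rw [mul_pow]; ring
      have hgeom : Summable (fun r : ℕ => (‖q‖ * ‖s‖)^r / dE q) :=
        (summable_geometric_of_lt_one hcs0 hcs1).div_const _
      have hsum : Summable (fun r => coef r * s^r) :=
        Summable.of_norm_bounded hgeom hbnd
      have hsumnorm : Summable (fun r => ‖coef r * s^r‖) :=
        Summable.of_nonneg_of_le (fun _ => norm_nonneg _) hbnd hgeom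
      have h1 : (∑' r, coef r * s^r) - 1 = ∑' r, coef (r+1) * s^(r+1) := by
        rw [Summable.tsum_eq_zero_add hsum, h0, pow_zero, mul_one]
        ring
      rw [h1]
      have hsumnorm' : Summable (fun r => ‖coef (r+1) * s^(r+1)‖) :=
        (summable_nat_add_iff 1).2 hsumnorm
      have hgeom' : Summable (fun r : ℕ => (‖q‖ * ‖s‖)^(r+1) / dE q) :=
        (summable_nat_add_iff 1).2 hgeom
      calc ‖∑' r, coef (r+1) * s^(r+1)‖ ≤ ∑' r, ‖coef (r+1) * s^(r+1)‖ :=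
            norm_tsum_le_tsum_norm hsumnorm'
      _ ≤ ∑' r : ℕ, (‖q‖ * ‖s‖)^(r+1) / dE q :=
            Summable.tsum_le_tsum (fun r => hbnd (r+1)) hsumnorm' hgeom'
      _ = (∑' r : ℕ, (‖q‖ * ‖s‖)^(r+1)) / dE q := by
            rw [tsum_div_const]
      _ = ((‖q‖ * ‖s‖) * ∑' r : ℕ, (‖q‖ * ‖s‖)^r) / dE q := by
            congr 1
            rw [← tsum_mul_left]
            exact tsum_congr fun r => pow_succ' _ _
      _ = ((‖q‖ * ‖s‖) * (1 - ‖q‖ * ‖s‖)⁻¹) / dE q := by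
            rw [tsum_geometric_of_lt_one hcs0 hcs1]
      _ ≤ 2 * (‖q‖ * (‖t‖ * ‖q‖^N)) / dE q := by
            rw [← hsnorm]
            have hinv : (1 - ‖q‖ * ‖s‖)⁻¹ ≤ 2 := by
              have h6 : (1:ℝ)/2 ≤ 1 - ‖q‖ * ‖s‖ := by linarith
              calc (1 - ‖q‖ * ‖s‖)⁻¹ ≤ ((1:ℝ)/2)⁻¹ := by
                    apply inv_anti₀ (by norm_num) h6
              _ = 2 := by norm_num
            have h5 : (‖q‖ * ‖s‖) * (1 - ‖q‖ * ‖s‖)⁻¹ ≤ 2 * (‖q‖ * ‖s‖) := by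
              nlinarith [mul_le_mul_of_nonneg_left hinv hcs0]
            exact div_le_div_of_nonneg_right h5 hd.le |>.trans_eq rfl
    · simpa using hsN.const_mul 2 |>.div_const (dE q)
  have := key.add_const 1
  simpa using this
end P3

section P4

open Filter


variable {q : ℂ} (hq : ‖q‖ < 1)
include hq

lemma Fprod (t : ℂ) : Fs q t = ∏' k : ℕ, (1 - t * q^(k+1)) := by
  have h1 : Tendsto (fun N => ∏ k ∈ Finset.range N, (1 - t*q^(k+1))) atTop
      (nhds (∏' k : ℕ, (1 - t * q^(k+1)))) :=
    (multipliable_fac hq t).hasProd.tendsto_prod_nat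
  have h2 : Tendsto (fun N : ℕ => Fs q (t * q^N)) atTop (nhds 1) :=
    tendsto_sum_one hq (cF q) (cF_zero q) (norm_cF_le hq) t
  have h3 := h1.mul h2
  rw [mul_one] at h3
  have h4 : Tendsto (fun _ : ℕ => Fs q t) atTop (nhds (Fs q t)) := tendsto_const_nhds
  refine tendsto_nhds_unique (h4.congr fun N => ?_) h3
  exact Fiter hq t N

lemma Gprod {t : ℂ} (ht : ‖t‖ * ‖q‖ < 1) :
    Gs q t * (∏' k : ℕ, (1 - t * q^(k+1))) = 1 := by
  have h1 : Tendsto (fun N => ∏ k ∈ Finset.range N, (1 - t*q^(k+1))) atTop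
      (nhds (∏' k : ℕ, (1 - t * q^(k+1)))) :=
    (multipliable_fac hq t).hasProd.tendsto_prod_nat
  have h2 : Tendsto (fun N : ℕ => Gs q (t * q^N)) atTop (nhds 1) :=
    tendsto_sum_one hq (cG q) (cG_zero q) (norm_cG_le hq) t
  have h3 := h1.const_mul (Gs q t)
  refine tendsto_nhds_unique (h3.congr fun N => ?_) h2
  exact (Giter hq ht N)
end P4

section P5




noncomputable def keyf (q : ℂ) (a b n : ℕ) : ℂ :=
  q^((a-n)*(b-n)) * (qPochN q a * qPochN q b) / (qPochN q (a-n) * qPochN q (b-n) * qPochN q n)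

variable {q : ℂ} (hq : ‖q‖ < 1)
include hq

lemma key (b : ℕ) : ∀ a : ℕ, a ≤ b → ∑ n ∈ Finset.range (a+1), keyf q a b n = 1 := by
  intro a
  induction a with
  | zero =>
    intro _
    rw [Finset.sum_range_one, keyf]
    simp only [Nat.zero_sub, Nat.sub_zero, qP_zero, one_mul, mul_one, Nat.zero_mul, pow_zero]
    exact div_self (qP_ne_zero hq b)
  | succ a ih =>
    intro hab
    have hA : a ≤ b := by omega
    set A : ℕ → ℂ := fun n => if n ≤ a then
      q^(((a+1)-n)*(b-n)) * (qPochN q a * qPochN q b) / (qPochN q (a-n) * qPochN q (b-n) * qPochN q n) else 0 with hAdef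
    set B : ℕ → ℂ := fun n => if 1 ≤ n then
      q^(((a+1)-n)*(b-n)) * q^((a+1)-n) * (qPochN q a * qPochN q b) /
        (qPochN q ((a+1)-n) * qPochN q (b-n) * qPochN q (n-1)) else 0 with hBdef
    have claim1 : ∀ n ∈ Finset.range (a+2), keyf q (a+1) b n = A n + B n := by
      intro n hn
      rw [Finset.mem_range] at hn
      rcases Nat.eq_zero_or_pos n with rfl | hn1
      · simp only [hAdef, hBdef, keyf]
        rw [if_pos (by omega : 0 ≤ a), if_neg (by omega : ¬ (1 ≤ 0)), add_zero]
        simp only [Nat.sub_zero, qP_zero, mul_one]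
        rw [div_eq_div_iff
          (by apply_rules [mul_ne_zero, qP_ne_zero hq, one_sub_qpow_ne_zero hq])
          (by apply_rules [mul_ne_zero, qP_ne_zero hq, one_sub_qpow_ne_zero hq])]
        rw [qP_succ q a]
        ring
      · rcases Nat.lt_or_ge n (a+1) with hna | hna
        · -- 1 ≤ n ≤ a
          obtain ⟨m, rfl⟩ : ∃ m, n = m + 1 := ⟨n-1, by omega⟩
          obtain ⟨r, rfl⟩ : ∃ r, a = (m+1) + r := ⟨a-(m+1), by omega⟩
          have e1 : (m+1+r+1) - (m+1) = r+1 := by omega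
          have e2 : (m+1+r) - (m+1) = r := by omega
          have e3 : (m+1) - 1 = m := by omega
          have e4 : m+1+r+1 = (m+1+r)+1 := by omega
          simp only [hAdef, hBdef, keyf, e1, e2, e3, if_pos (by omega : m+1 ≤ m+1+r),
            if_pos (by omega : 1 ≤ m+1)]
          have hq1 : q^(m+1+r+1) = q^(r+1) * q^(m+1) := by rw [← pow_add]; ring_nf
          rw [e4, qP_succ q (m+1+r), qP_succ q r, qP_succ q m, hq1]
          rw [div_add_div _ _
            (by apply_rules [mul_ne_zero, qP_ne_zero hq, one_sub_qpow_ne_zero hq])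
            (by apply_rules [mul_ne_zero, qP_ne_zero hq, one_sub_qpow_ne_zero hq])]
          rw [div_eq_div_iff
            (by apply_rules [mul_ne_zero, qP_ne_zero hq, one_sub_qpow_ne_zero hq])
            (by apply_rules [mul_ne_zero, qP_ne_zero hq, one_sub_qpow_ne_zero hq])]
          ring
        · -- n = a+1
          have hn2 : n = a+1 := by omega
          subst hn2
          simp only [hAdef, hBdef, keyf]
          rw [if_neg (by omega), if_pos (by omega)]
          have e1 : (a+1) - (a+1) = 0 := by omega
          have e2 : (a+1) - 1 = a := by omega
          rw [e1, e2, qP_zero, zero_add]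
          rw [div_eq_div_iff
            (by apply_rules [mul_ne_zero, qP_ne_zero hq, one_sub_qpow_ne_zero hq, one_ne_zero])
            (by apply_rules [mul_ne_zero, qP_ne_zero hq, one_sub_qpow_ne_zero hq, one_ne_zero])]
          rw [qP_succ q a, Nat.zero_mul, pow_zero]
          ring
    have claim2 : ∀ n ∈ Finset.range (a+1), A n + B (n+1) = keyf q a b n := by
      intro n hn
      rw [Finset.mem_range] at hn
      obtain ⟨r, rfl⟩ : ∃ r, a = n + r := ⟨a-n, by omega⟩
      obtain ⟨c, hc⟩ : ∃ c, b = (n+1) + c := ⟨b-(n+1), by omega⟩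
      subst hc
      have e1 : (n+r+1) - n = r+1 := by omega
      have e2 : (n+r) - n = r := by omega
      have e3 : (n+1+c) - n = c+1 := by omega
      have e4 : (n+1+c) - (n+1) = c := by omega
      have e5 : (n+r+1) - (n+1) = r := by omega
      have e6 : (n+1) - 1 = n := by omega
      simp only [hAdef, hBdef, keyf, e1, e2, e3, e4, e5, e6,
        if_pos (by omega : n ≤ n+r), if_pos (by omega : 1 ≤ n+1)]
      rw [qP_succ q c]
      rw [div_add_div _ _
        (by apply_rules [mul_ne_zero, qP_ne_zero hq, one_sub_qpow_ne_zero hq])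
        (by apply_rules [mul_ne_zero, qP_ne_zero hq, one_sub_qpow_ne_zero hq])]
      rw [div_eq_div_iff
        (by apply_rules [mul_ne_zero, qP_ne_zero hq, one_sub_qpow_ne_zero hq])
        (by apply_rules [mul_ne_zero, qP_ne_zero hq, one_sub_qpow_ne_zero hq])]
      ring
    have hB0 : B 0 = 0 := by simp [hBdef]
    have hAtop : A (a+1) = 0 := by rw [hAdef]; simp
    calc ∑ n ∈ Finset.range (a+1+1), keyf q (a+1) b n
        = ∑ n ∈ Finset.range (a+2), (A n + B n) := Finset.sum_congr rfl claim1
    _ = (∑ n ∈ Finset.range (a+2), A n) + (∑ n ∈ Finset.range (a+2), B n) :=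
        Finset.sum_add_distrib
    _ = (∑ n ∈ Finset.range (a+1), A n) + (∑ n ∈ Finset.range (a+1), B (n+1)) := by
        rw [Finset.sum_range_succ, hAtop, add_zero, Finset.sum_range_succ' B (a+1), hB0, add_zero]
    _ = ∑ n ∈ Finset.range (a+1), (A n + B (n+1)) := Finset.sum_add_distrib.symm
    _ = ∑ n ∈ Finset.range (a+1), keyf q a b n := Finset.sum_congr rfl claim2
    _ = 1 := ih hA
end P5

section P6


open Filter



section
variable {q : ℂ} (hq : ‖q‖ < 1)

lemma keyf_comm (a b n : ℕ) : keyf q a b n = keyf q b a n := by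
  rw [keyf, keyf, Nat.mul_comm (a-n)]
  ring

include hq

lemma keymin (a b : ℕ) : ∑ n ∈ Finset.range (min a b + 1), keyf q a b n = 1 := by
  rcases le_total a b with h | h
  · rw [min_eq_left h]; exact key hq b a h
  · rw [min_eq_right h]
    calc ∑ n ∈ Finset.range (b+1), keyf q a b n
        = ∑ n ∈ Finset.range (b+1), keyf q b a n :=
          Finset.sum_congr rfl fun n _ => keyf_comm a b n
    _ = 1 := key hq a b h

end

lemma tri_mul_le (r s : ℕ) : r * s ≤ tri r + tri s := by
  nlinarith [two_tri r, two_tri s, two_mul_le_add_sq r s]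

lemma exponent_eq (r s n : ℕ) :
    ((((r+n : ℕ) : ℤ) - ((s+n : ℕ) : ℤ))^2 + ((r+n : ℕ) : ℤ) + ((s+n : ℕ) : ℤ)) / 2
      = ((tri r : ℤ) + tri s + n) - (r : ℤ) * s := by
  have c1 : (2:ℤ) * (tri r : ℤ) = (r:ℤ) * ((r:ℤ)+1) := by exact_mod_cast two_tri r
  have c2 : (2:ℤ) * (tri s : ℤ) = (s:ℤ) * ((s:ℤ)+1) := by exact_mod_cast two_tri s
  have hv : ((((r+n : ℕ) : ℤ) - ((s+n : ℕ) : ℤ))^2 + ((r+n : ℕ) : ℤ) + ((s+n : ℕ) : ℤ))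
      = 2 * (((tri r : ℤ) + tri s + n) - (r : ℤ) * s) := by
    push_cast
    linear_combination -c1 - c2
  rw [hv, Int.mul_ediv_cancel_left _ (by norm_num)]

lemma exponent_toNat (r s n : ℕ) :
    (((((r+n : ℕ) : ℤ) - ((s+n : ℕ) : ℤ))^2 + ((r+n : ℕ) : ℤ) + ((s+n : ℕ) : ℤ)) / 2).toNat
      + r * s = tri r + tri s + n := by
  rw [exponent_eq]
  have hge := tri_mul_le r s
  have h1 : ((tri r : ℤ) + tri s + n) - (r : ℤ) * s
      = (((tri r + tri s : ℕ) : ℤ) + (n:ℕ)) - ((r*s : ℕ) : ℤ) := by push_cast; ring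
  rw [h1]
  set k := tri r + tri s
  set m := r * s
  omega


end P6

end QPaux

open QPaux in
set_option maxHeartbeats 2000000 in
theorem qpoch_double_sum_two (q x y : ℂ) (hq : ‖q‖ < 1) (hxyq : ‖x * y * q‖ < 1) :
    (∏' i : ℕ, (1 - x * q ^ (i + 1))) * (∏' i : ℕ, (1 - y * q ^ (i + 1))) /
        (∏' i : ℕ, (1 - x * y * q ^ (i + 1))) =
      ∑' rs : ℕ × ℕ,
        (-1) ^ (rs.1 + rs.2) *
            q ^ (((((rs.1 : ℤ) - (rs.2 : ℤ)) ^ 2 + rs.1 + rs.2) / 2).toNat) *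
            x ^ rs.1 * y ^ rs.2 / (qPochN q rs.1 * qPochN q rs.2) := by
  have hxy : ‖x * y‖ * ‖q‖ < 1 := by rwa [norm_mul] at hxyq
  -- abbreviations
  set T : (ℕ × ℕ) × ℕ → ℂ := fun z =>
    cF q z.1.1 * x^z.1.1 * (cF q z.1.2 * y^z.1.2) * (cG q z.2 * (x*y)^z.2) with hT
  set R : ℕ × ℕ → ℂ := fun rs =>
    (-1) ^ (rs.1 + rs.2) *
      q ^ (((((rs.1 : ℤ) - (rs.2 : ℤ)) ^ 2 + rs.1 + rs.2) / 2).toNat) *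
      x ^ rs.1 * y ^ rs.2 / (qPochN q rs.1 * qPochN q rs.2) with hR
  -- step 1 : LHS = Fs x * Fs y * Gs (xy)
  have hGP := Gprod hq hxy
  have hPne : (∏' k : ℕ, (1 - x * y * q^(k+1))) ≠ 0 := by
    intro h
    rw [h, mul_zero] at hGP
    exact zero_ne_one hGP
  have step1 : (∏' i : ℕ, (1 - x * q ^ (i + 1))) * (∏' i : ℕ, (1 - y * q ^ (i + 1))) /
      (∏' i : ℕ, (1 - x * y * q ^ (i + 1))) = Fs q x * Fs q y * Gs q (x*y) := by
    rw [div_eq_iff hPne, ← Fprod hq x, ← Fprod hq y]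
    calc Fs q x * Fs q y = Fs q x * Fs q y * 1 := by rw [mul_one]
    _ = Fs q x * Fs q y * (Gs q (x*y) * (∏' k : ℕ, (1 - x * y * q^(k+1)))) := by rw [hGP]
    _ = Fs q x * Fs q y * Gs q (x*y) * (∏' k : ℕ, (1 - x * y * q^(k+1))) := by ring
  -- step 2 : triple product to tsum over (ℕ×ℕ)×ℕ
  have hnx := summable_norm_cF hq x
  have hny := summable_norm_cF hq y
  have hnG := summable_norm_cG hq hxy
  have hFF : Fs q x * Fs q y = ∑' p : ℕ × ℕ, cF q p.1 * x^p.1 * (cF q p.2 * y^p.2) :=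
    tsum_mul_tsum_of_summable_norm hnx hny
  have hnFF : Summable (fun p : ℕ × ℕ => ‖cF q p.1 * x^p.1 * (cF q p.2 * y^p.2)‖) := by
    have h1 : Summable (fun r : ℕ => ‖(fun r => ‖cF q r * x^r‖) r‖) := by
      simpa [norm_norm] using hnx
    have h2 : Summable (fun s : ℕ => ‖(fun s => ‖cF q s * y^s‖) s‖) := by
      simpa [norm_norm] using hny
    have := summable_mul_of_summable_norm (R := ℝ) h1 h2
    apply this.congr
    intro p
    exact (norm_mul _ _).symm
  have step2 : Fs q x * Fs q y * Gs q (x*y) = ∑' z : (ℕ × ℕ) × ℕ, T z := by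
    rw [hFF]
    exact tsum_mul_tsum_of_summable_norm hnFF hnG
  -- summability of T
  have hsumT : Summable T := by
    have := summable_mul_of_summable_norm (R := ℂ) hnFF hnG
    exact this
  -- step 3 : reindex
  let e : (Σ _ : ℕ × ℕ, ℕ) ≃ (ℕ × ℕ) × ℕ := Equiv.sigmaEquivProd _ _
  -- we instead use the explicit equiv with Fin
  let E : (Σ ab : ℕ × ℕ, Fin (min ab.1 ab.2 + 1)) ≃ (ℕ × ℕ) × ℕ :=
    { toFun := fun σ => ((σ.1.1 - σ.2.val, σ.1.2 - σ.2.val), σ.2.val)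
      invFun := fun z => ⟨(z.1.1 + z.2, z.1.2 + z.2), ⟨z.2, by simp [Nat.lt_succ_iff]⟩⟩
      left_inv := by
        rintro ⟨⟨a, b⟩, ⟨n, hn⟩⟩
        simp only [Nat.lt_succ_iff, le_min_iff] at hn
        refine Sigma.ext (Prod.ext (by simp; omega) (by simp; omega)) ?_
        rw [Fin.heq_ext_iff (by simp; omega)]
      right_inv := by
        rintro ⟨⟨r, s⟩, n⟩
        simp }
  have step3 : ∑' z : (ℕ × ℕ) × ℕ, T z
      = ∑' ab : ℕ × ℕ, ∑ n ∈ Finset.range (min ab.1 ab.2 + 1), T ((ab.1 - n, ab.2 - n), n) := by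
    rw [← E.tsum_eq T]
    rw [Summable.tsum_sigma (show Summable (fun σ : (Σ ab : ℕ × ℕ, Fin (min ab.1 ab.2 + 1)) => T (E σ))
      from E.summable_iff.2 hsumT)]
    apply tsum_congr
    intro ab
    rw [tsum_fintype]
    calc ∑ c : Fin (min ab.1 ab.2 + 1), T (E ⟨ab, c⟩)
        = ∑ c : Fin (min ab.1 ab.2 + 1), (fun n => T ((ab.1 - n, ab.2 - n), n)) c.val :=
          Finset.sum_congr rfl (fun c _ => rfl)
    _ = ∑ n ∈ Finset.range (min ab.1 ab.2 + 1), T ((ab.1 - n, ab.2 - n), n) :=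
          Fin.sum_univ_eq_sum_range (fun n => T ((ab.1 - n, ab.2 - n), n)) (min ab.1 ab.2 + 1)
  -- step 4 : per (a,b) evaluation
  have step4 : ∀ ab : ℕ × ℕ,
      ∑ n ∈ Finset.range (min ab.1 ab.2 + 1), T ((ab.1 - n, ab.2 - n), n) = R ab := by
    rintro ⟨a, b⟩
    have hterm : ∀ n ∈ Finset.range (min a b + 1),
        T ((a - n, b - n), n) = R (a, b) * keyf q a b n := by
      intro n hn
      rw [Finset.mem_range, Nat.lt_succ_iff, le_min_iff] at hn
      obtain ⟨r, rfl⟩ : ∃ r, a = r + n := ⟨a - n, by omega⟩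
      obtain ⟨s, rfl⟩ : ∃ s, b = s + n := ⟨b - n, by omega⟩
      have e1 : r + n - n = r := by omega
      have e2 : s + n - n = s := by omega
      simp only [hT, hR, keyf, e1, e2]
      have hsign : ((-1 : ℂ)) ^ (r + n + (s + n)) = (-1)^r * (-1)^s := by
        rw [show r + n + (s + n) = r + s + 2*n by ring, pow_add, pow_add, pow_mul]
        norm_num
      set m : ℕ := ((((((r+n : ℕ) : ℤ)) - ((s+n : ℕ) : ℤ))^2 + ((r+n : ℕ) : ℤ) + ((s+n : ℕ) : ℤ)) / 2).toNat with hm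
      have hEt : m + r * s = tri r + tri s + n := by rw [hm]; exact exponent_toNat r s n
      have hqpow : q ^ m * q ^ (r * s) = q ^ (tri r) * q ^ (tri s) * q ^ n := by
        rw [← pow_add, ← pow_add, ← pow_add, hEt]
      rw [cF, cF, cG, hsign]
      rw [div_mul_div_comm, eq_div_iff (by apply_rules [mul_ne_zero, qP_ne_zero hq])]
      field_simp [qP_ne_zero hq r, qP_ne_zero hq s, qP_ne_zero hq n]
      linear_combination (-(x^r*x^n*y^s*y^n*qPochN q (r+n)*qPochN q (s+n))) * hqpow
    show ∑ n ∈ Finset.range (a ⊓ b + 1), T ((a - n, b - n), n) = R (a, b)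
    rw [Finset.sum_congr rfl hterm, ← Finset.mul_sum, keymin hq a b, mul_one]
  -- conclusion
  rw [step1, step2, step3]
  exact tsum_congr step4
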